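/- Let Ω ⊆ ℂ be a domain. Suppose Ω satisfies (LHMD)_{2,η} for some η > 0: there exist constants C > 0 and r₀ ∈ (0, 1/e) such that for every a ∈ ∂Ω, every r ∈ (0, r₀), every u ∈ F_{a,r}, and every z ∈ Ω ∩ D(a,r), one has u(z) ≤ C·exp( −η·( log(1/|z−a|)/log log(1/|z−a|) − log(1/r)/log log(1/r) ) ). Then there exist constants β > 0, C′ > 0, ε ∈ (0,1) and r₁ ∈ (0, r₀) such that for every a ∈ ∂Ω, every r ∈ (0, r₁), every u ∈ F_{a,r}, and every z ∈ Ω with |z − a| = C′·r·(log(1/r))^{−β}, one has u(z) ≤ 1 − ε (i.e. Ω satisfies condition (Δ)_{2,β}). -/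

import Mathlib

open Metric Set

/-- A real function is harmonic on an open set `s ⊆ ℂ` iff it is continuous on
`s` and satisfies the circle mean-value property on every closed disc
contained in `s`. -/
def HarmonicOn (u : ℂ → ℝ) (s : Set ℂ) : Prop :=
  ContinuousOn u s ∧ ∀ c : ℂ, ∀ ρ : ℝ, 0 < ρ → closedBall c ρ ⊆ s →
    u c = (1 / (2 * Real.pi)) *
      ∫ θ in (0 : ℝ)..(2 * Real.pi), u (c + ρ * Complex.exp (θ * Complex.I))

/-- The family `F_{a,r}` of competitors for the harmonic measure of
`∂D(a,r) ∩ Ω` in `Ω ∩ D(a,r)`. -/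
def MemF (Ω : Set ℂ) (a : ℂ) (r : ℝ) (u : ℂ → ℝ) : Prop :=
  HarmonicOn u (Ω ∩ ball a r) ∧
  (∀ z ∈ Ω ∩ ball a r, u z ≤ 1) ∧
  (∀ ζ ∈ frontier Ω ∩ ball a r,
    Filter.limsup u (nhdsWithin ζ (Ω ∩ ball a r)) ≤ 0)

/-- If `Ω` satisfies `(LHMD)_{2,η}` for some `η > 0`, then `Ω` satisfies
condition `(Δ)_{2,β}` for some `β > 0`. -/

lemma aux_gain (L β : ℝ) (hβ : 0 < β) (hβL : β ≤ L) (hlog : 2 ≤ Real.log L)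
    (hL : 0 < L) :
    β / 4 ≤ (L + β * Real.log L) / Real.log (L + β * Real.log L)
      - L / Real.log L := by
  set l := Real.log L with hl
  have hl0 : (0:ℝ) < l := lt_of_lt_of_le two_pos hlog
  set L' := L + β * l with hL'def
  have hLL' : L < L' := by
    have h0 : 0 < β * l := mul_pos hβ hl0
    rw [hL'def]; linarith
  have hL'0 : 0 < L' := lt_trans hL hLL'
  have hlogle : Real.log L' ≤ l + β * l / L := by
    have h2 : Real.log (L' / L) ≤ L' / L - 1 :=
      Real.log_le_sub_one_of_pos (by positivity)
    have h1 : Real.log (L' / L) = Real.log L' - l := Real.log_div (ne_of_gt hL'0) (ne_of_gt hL)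
    have h3 : L' / L - 1 = β * l / L := by
      rw [hL'def]; field_simp; ring
    linarith
  have hlogL'pos : 0 < Real.log L' :=
    lt_of_lt_of_le hl0 (Real.log_le_log hL (le_of_lt hLL'))
  have hden : 0 < l + β * l / L := by positivity
  have step1 : L' / (l + β * l / L) ≤ L' / Real.log L' :=
    div_le_div_of_nonneg_left (le_of_lt hL'0) hlogL'pos hlogle
  have step2 : β / 4 + L / l ≤ L' / (l + β * l / L) := by
    rw [le_div_iff₀ hden]
    have key : (β / 4 + L / l) * (l + β * l / L) ≤ L' := by
      have expand : (β / 4 + L / l) * (l + β * l / L)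
          = β * l / 4 + β * β * l / (4 * L) + L + β := by
        field_simp
        ring
      rw [expand, hL'def]
      have h5 : β * β * l / (4 * L) ≤ β * l / 4 := by
        rw [div_le_div_iff₀ (by positivity) (by norm_num)]
        nlinarith
      nlinarith
    exact key
  linarith

theorem stmt_10 (Ω : Set ℂ) (hopen : IsOpen Ω) (hconn : IsConnected Ω)
    (η C r₀ : ℝ) (hη : 0 < η) (hC : 0 < C)
    (hr₀ : r₀ ∈ Set.Ioo (0 : ℝ) (Real.exp 1)⁻¹)
    (hLHMD : ∀ a ∈ frontier Ω, ∀ r ∈ Set.Ioo (0 : ℝ) r₀, ∀ u : ℂ → ℝ,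
      MemF Ω a r u → ∀ z ∈ Ω ∩ ball a r,
        u z ≤ C * Real.exp (-η *
          (Real.log (1 / dist z a) / Real.log (Real.log (1 / dist z a))
            - Real.log (1 / r) / Real.log (Real.log (1 / r))))) :
    ∃ β > (0 : ℝ), ∃ C' > (0 : ℝ), ∃ ε ∈ Set.Ioo (0 : ℝ) 1,
      ∃ r₁ ∈ Set.Ioo (0 : ℝ) r₀,
        ∀ a ∈ frontier Ω, ∀ r ∈ Set.Ioo (0 : ℝ) r₁, ∀ u : ℂ → ℝ,
          MemF Ω a r u → ∀ z ∈ Ω,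
            dist z a = C' * r * (Real.log (1 / r)) ^ (-β) → u z ≤ 1 - ε := by
  -- choose constants
  set K : ℝ := max (Real.log (2 * C) / η) 0 with hKdef
  have hK0 : 0 ≤ K := le_max_right _ _
  have hKlog : Real.log (2 * C) ≤ η * K := by
    have h1 : Real.log (2 * C) / η ≤ K := le_max_left _ _
    calc Real.log (2 * C) = η * (Real.log (2 * C) / η) := by
          field_simp
      _ ≤ η * K := by
          exact mul_le_mul_of_nonneg_left h1 (le_of_lt hη)
  set β : ℝ := 4 * K + 4 with hβdef
  have hβ0 : (0:ℝ) < β := by positivity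
  set M : ℝ := max (Real.exp 2) β with hMdef
  have hM2 : Real.exp 2 ≤ M := le_max_left _ _
  have hMβ : β ≤ M := le_max_right _ _
  have hM0 : 0 < M := lt_of_lt_of_le (Real.exp_pos 2) hM2
  set r₁ : ℝ := min (r₀ / 2) (Real.exp (-(M + 1))) with hr₁def
  have hr₁0 : 0 < r₁ := lt_min (by linarith [hr₀.1]) (Real.exp_pos _)
  have hr₁r₀ : r₁ < r₀ := lt_of_le_of_lt (min_le_left _ _) (by linarith [hr₀.1])
  refine ⟨β, hβ0, 1, one_pos, 1/2, ⟨by norm_num, by norm_num⟩, r₁, ⟨hr₁0, hr₁r₀⟩,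
    ?_⟩
  intro a ha r hr u hu z hz hdz
  obtain ⟨hr0, hrr₁⟩ := hr
  set L : ℝ := Real.log (1 / r) with hLdef
  -- L is large
  have hrexp : r < Real.exp (-(M + 1)) := lt_of_lt_of_le hrr₁ (min_le_right _ _)
  have hlogr : Real.log r < -(M + 1) := by
    have := Real.log_lt_log hr0 hrexp
    rwa [Real.log_exp] at this
  have hLeq : L = -Real.log r := by rw [hLdef, one_div, Real.log_inv]
  have hLM : M + 1 < L := by rw [hLeq]; linarith
  have hL0 : 0 < L := by linarith
  have hβL : β ≤ L := by linarith [hMβ]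
  have hL1 : 1 < L := by
    have : (1:ℝ) < Real.exp 2 := by
      have := Real.add_one_le_exp (2:ℝ); linarith
    linarith
  have hlogL : 2 ≤ Real.log L := by
    rw [← Real.log_exp 2]
    exact Real.log_le_log (Real.exp_pos 2) (by linarith)
  -- the point z is inside the ball
  have hrpowpos : 0 < L ^ (-β) := Real.rpow_pos_of_pos hL0 _
  have hrpowlt : L ^ (-β) < 1 :=
    Real.rpow_lt_one_of_one_lt_of_neg hL1 (by linarith)
  have hd : dist z a = r * L ^ (-β) := by rw [hdz]; ring
  have hd0 : 0 < dist z a := by rw [hd]; positivity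
  have hdr : dist z a < r := by
    rw [hd]
    calc r * L ^ (-β) < r * 1 := by
          exact mul_lt_mul_of_pos_left hrpowlt hr0
      _ = r := mul_one r
  have hzball : z ∈ Ω ∩ ball a r := ⟨hz, mem_ball.mpr hdr⟩
  have hrr₀ : r ∈ Set.Ioo (0:ℝ) r₀ := ⟨hr0, lt_trans hrr₁ hr₁r₀⟩
  have hbound := hLHMD a ha r hrr₀ u hu z hzball
  -- compute log(1/dist z a)
  have hlog1d : Real.log (1 / dist z a) = L + β * Real.log L := by
    rw [one_div, Real.log_inv, hd,
      Real.log_mul (ne_of_gt hr0) (ne_of_gt hrpowpos),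
      Real.log_rpow hL0]
    rw [hLeq]; ring
  rw [hlog1d, ← hLdef] at hbound
  -- apply the gain lemma
  have hgain := aux_gain L β hβ0 hβL hlogL hL0
  have hβ4 : β / 4 = K + 1 := by rw [hβdef]; ring
  have hηD : Real.log (2 * C) ≤ η *
      ((L + β * Real.log L) / Real.log (L + β * Real.log L)
        - L / Real.log L) := by
    have h6 : K + 1 ≤ (L + β * Real.log L) / Real.log (L + β * Real.log L)
        - L / Real.log L := by rw [← hβ4]; exact hgain
    calc Real.log (2 * C) ≤ η * K := hKlog
      _ ≤ η * (K + 1) := by nlinarith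
      _ ≤ _ := mul_le_mul_of_nonneg_left h6 (le_of_lt hη)
  have hexp : Real.exp (-η *
      ((L + β * Real.log L) / Real.log (L + β * Real.log L)
        - L / Real.log L)) ≤ (2 * C)⁻¹ := by
    rw [← Real.exp_log (show (0:ℝ) < (2 * C)⁻¹ by positivity), Real.log_inv]
    apply Real.exp_le_exp.mpr
    linarith
  have : u z ≤ C * (2 * C)⁻¹ := by
    calc u z ≤ _ := hbound
      _ ≤ C * (2 * C)⁻¹ := mul_le_mul_of_nonneg_left hexp (le_of_lt hC)
  have hCC : C * (2 * C)⁻¹ = 1 - 1/2 := by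
    field_simp
    ring
  linarith [hCC ▸ this]
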